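/- (Characterization of interior-avoiding products of punctured Z-stabilizers.) Let a ∈ F₂^(C × V) with a(c, v) = 0 unless c ∈ T and v ∈ S. Then the vector a·H_Z' ∈ F₂^((V × V) ⊕ (C × C)) vanishes on every interior coordinate (i.e. on (B × S) ∪ (T × A)) if and only if a lies in the span of pure tensors g ⊗ f, where g ∈ F₂^C is supported on T and satisfies 1_B·Hᵗ·g = 0, and f ∈ F₂^V is supported on S and satisfies 1_A·H·f = 0. -/

import Mathlib

open Matrix Kronecker

variable {V C : Type*} [Fintype V] [Fintype C] [DecidableEq V] [DecidableEq C]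

/-- X-stabilizer matrix `H_X = (1_V ⊗ H | Hᵗ ⊗ 1_C)` of the hypergraph product of `H`
with itself. Rows are indexed by `V × C`, column blocks by `V × V` and `C × C`. -/
def HX (H : Matrix C V (ZMod 2)) : Matrix (V × C) ((V × V) ⊕ (C × C)) (ZMod 2) :=
  Matrix.fromCols ((1 : Matrix V V (ZMod 2)) ⊗ₖ H) (Hᵀ ⊗ₖ (1 : Matrix C C (ZMod 2)))

/-- Z-stabilizer matrix `H_Z = (H ⊗ 1_V | 1_C ⊗ Hᵗ)`. Rows are indexed by `C × V`. -/
def HZ (H : Matrix C V (ZMod 2)) : Matrix (C × V) ((V × V) ⊕ (C × C)) (ZMod 2) :=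
  Matrix.fromCols (H ⊗ₖ (1 : Matrix V V (ZMod 2))) ((1 : Matrix C C (ZMod 2)) ⊗ₖ Hᵀ)

/-- Diagonal 0–1 projector matrix `1_P` onto a subset `P`. -/
def projM {α : Type*} [Fintype α] [DecidableEq α] (P : Finset α) : Matrix α α (ZMod 2) :=
  Matrix.diagonal fun a => if a ∈ P then 1 else 0

/-- Neighborhood `N = {c ∈ C : ∃ v ∈ S, H c v = 1}` of a set `S` of variable nodes. -/
def Nbhd (H : Matrix C V (ZMod 2)) (S : Finset V) : Finset C :=
  @Finset.filter _ (fun c => ∃ v ∈ S, H c v = 1) (fun _ => inferInstance) Finset.univ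

/-- Ancestor `A = {c ∈ C : ∀ v, H c v = 1 → v ∈ S}` of a set `S` of variable nodes. -/
def Anc (H : Matrix C V (ZMod 2)) (S : Finset V) : Finset C :=
  @Finset.filter _ (fun c => ∀ v, H c v = 1 → v ∈ S) (fun _ => inferInstance) Finset.univ

/-- Neighborhood `M = {v ∈ V : ∃ c ∈ T, H c v = 1}` of a set `T` of check nodes. -/
def NbhdT (H : Matrix C V (ZMod 2)) (T : Finset C) : Finset V :=
  Finset.univ.filter fun v => ∃ c ∈ T, H c v = 1

/-- Ancestor `B = {v ∈ V : ∀ c, H c v = 1 → c ∈ T}` of a set `T` of check nodes. -/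
def AncT (H : Matrix C V (ZMod 2)) (T : Finset C) : Finset V :=
  Finset.univ.filter fun v => ∀ c, H c v = 1 → c ∈ T

/-- Smooth-puncture X matrix `H_X' = (1_B ⊗ H_S | H_Tᵗ ⊗ 1_A)`,
where `H_S = H·1_S` and `H_T = 1_T·H`. -/
def HX' (H : Matrix C V (ZMod 2)) (S : Finset V) (T : Finset C) :
    Matrix (V × C) ((V × V) ⊕ (C × C)) (ZMod 2) :=
  Matrix.fromCols (projM (AncT H T) ⊗ₖ (H * projM S)) ((projM T * H)ᵀ ⊗ₖ projM (Anc H S))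

/-- Smooth-puncture Z matrix `H_Z' = (H_T ⊗ 1_S | 1_T ⊗ H_Sᵗ)`. -/
def HZ' (H : Matrix C V (ZMod 2)) (S : Finset V) (T : Finset C) :
    Matrix (C × V) ((V × V) ⊕ (C × C)) (ZMod 2) :=
  Matrix.fromCols ((projM T * H) ⊗ₖ projM S) (projM T ⊗ₖ (H * projM S)ᵀ)


lemma vecMul_HZ'_inl (H : Matrix C V (ZMod 2)) (S : Finset V) (T : Finset C)
    (a : C × V → ZMod 2) (u : V) (v : V) :
    Matrix.vecMul a (HZ' H S T) (Sum.inl (u, v)) =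
      (if v ∈ S then 1 else 0) * ∑ c, (if c ∈ T then 1 else 0) * H c u * a (c, v) := by
  simp only [HZ', Matrix.vecMul, dotProduct, Matrix.fromCols_apply_inl,
    Matrix.kroneckerMap_apply, projM, Matrix.diagonal_mul, Matrix.diagonal_apply,
    Fintype.sum_prod_type]
  rw [Finset.mul_sum]
  refine Finset.sum_congr rfl fun c _ => ?_
  rw [Finset.sum_eq_single v]
  · split_ifs <;> first | ring1 | exact absurd rfl (by assumption)
  · intro w _ hw; simp [hw]
  · simp

lemma vecMul_HZ'_inr (H : Matrix C V (ZMod 2)) (S : Finset V) (T : Finset C)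
    (a : C × V → ZMod 2) (c : C) (c' : C) :
    Matrix.vecMul a (HZ' H S T) (Sum.inr (c, c')) =
      (if c ∈ T then 1 else 0) * ∑ v, (if v ∈ S then 1 else 0) * H c' v * a (c, v) := by
  simp only [HZ', Matrix.vecMul, dotProduct, Matrix.fromCols_apply_inr,
    Matrix.kroneckerMap_apply, projM, Matrix.diagonal_apply, Matrix.mul_diagonal,
    Matrix.transpose_apply, Fintype.sum_prod_type]
  rw [Finset.sum_eq_single c]
  · rw [Finset.mul_sum]
    refine Finset.sum_congr rfl fun v _ => ?_
    split_ifs <;> first | ring1 | exact absurd rfl (by assumption)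
  · intro b _ hb
    refine Finset.sum_eq_zero fun v _ => ?_
    simp [hb]
  · simp

lemma mulVec_projB (H : Matrix C V (ZMod 2)) (B : Finset V) (g : C → ZMod 2) (u : V) :
    ((projM B * Hᵀ).mulVec g) u = (if u ∈ B then 1 else 0) * ∑ c, H c u * g c := by
  simp only [Matrix.mulVec, dotProduct, projM, Matrix.diagonal_mul,
    Matrix.transpose_apply, Finset.mul_sum]
  refine Finset.sum_congr rfl fun c _ => ?_
  split_ifs <;> first | ring1 | exact absurd rfl (by assumption)

lemma mulVec_projA (H : Matrix C V (ZMod 2)) (A : Finset C) (f : V → ZMod 2) (c : C) :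
    ((projM A * H).mulVec f) c = (if c ∈ A then 1 else 0) * ∑ v, H c v * f v := by
  simp only [Matrix.mulVec, dotProduct, projM, Matrix.diagonal_mul, Finset.mul_sum]
  refine Finset.sum_congr rfl fun v _ => ?_
  split_ifs <;> first | ring1 | exact absurd rfl (by assumption)

/-- Submodule of vectors supported on `P` killed by `M`. -/
def kerSupp {α β : Type*} [Fintype α] [Fintype β] (M : Matrix β α (ZMod 2)) (P : Finset α) :
    Submodule (ZMod 2) (α → ZMod 2) where
  carrier := {g | (∀ x ∉ P, g x = 0) ∧ M.mulVec g = 0}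
  add_mem' := fun hx hy => ⟨fun c hc => by
      simp only [Pi.add_apply, hx.1 c hc, hy.1 c hc, add_zero],
    by rw [Matrix.mulVec_add, hx.2, hy.2, add_zero]⟩
  zero_mem' := ⟨fun c _ => rfl, Matrix.mulVec_zero M⟩
  smul_mem' := fun r x hx => ⟨fun c hc => by
      simp only [Pi.smul_apply, hx.1 c hc, smul_zero],
    by rw [Matrix.mulVec_smul, hx.2, smul_zero]⟩

lemma mem_kerSupp {α β : Type*} [Fintype α] [Fintype β] (M : Matrix β α (ZMod 2)) (P : Finset α)
    (g : α → ZMod 2) :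
    g ∈ kerSupp M P ↔ (∀ x ∉ P, g x = 0) ∧ M.mulVec g = 0 := Iff.rfl

/-- Characterization of interior-avoiding products of punctured Z-stabilizers:
for `a` supported on `T × S`, the vector `a·H_Z'` vanishes on the interior
`(B × S) ∪ (T × A)` iff `a` lies in the span of pure tensors `g ⊗ f` with
`g` supported on `T`, `1_B·Hᵗ·g = 0`, `f` supported on `S`, `1_A·H·f = 0`. -/
theorem stmt_14 (H : Matrix C V (ZMod 2)) (S : Finset V) (T : Finset C)
    (a : C × V → ZMod 2) (ha : ∀ c v, ¬(c ∈ T ∧ v ∈ S) → a (c, v) = 0) :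
    ((∀ u v, u ∈ AncT H T → v ∈ S →
        Matrix.vecMul a (HZ' H S T) (Sum.inl (u, v)) = 0) ∧
     (∀ c c', c ∈ T → c' ∈ Anc H S →
        Matrix.vecMul a (HZ' H S T) (Sum.inr (c, c')) = 0)) ↔
    a ∈ Submodule.span (ZMod 2)
      {w : C × V → ZMod 2 | ∃ g : C → ZMod 2, ∃ f : V → ZMod 2,
        (∀ c ∉ T, g c = 0) ∧ (projM (AncT H T) * Hᵀ).mulVec g = 0 ∧
        (∀ v ∉ S, f v = 0) ∧ (projM (Anc H S) * H).mulVec f = 0 ∧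
        w = fun p : C × V => g p.1 * f p.2} := by
  constructor
  · rintro ⟨h1, h2⟩
    have hcol : ∀ v : V, (fun c => a (c, v)) ∈ kerSupp (projM (AncT H T) * Hᵀ) T := by
      intro v
      by_cases hv : v ∈ S
      · refine ⟨fun c hc => ha c v (fun h => hc h.1), ?_⟩
        funext u
        rw [Pi.zero_apply, mulVec_projB]
        by_cases hu : u ∈ AncT H T
        · have h0 := h1 u v hu hv
          rw [vecMul_HZ'_inl, if_pos hv, one_mul] at h0
          rw [if_pos hu, one_mul, ← h0]
          refine Finset.sum_congr rfl fun c _ => ?_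
          by_cases hc : c ∈ T
          · rw [if_pos hc, one_mul]
          · rw [if_neg hc, ha c v (fun h => hc h.1), zero_mul, mul_zero, mul_zero]
        · rw [if_neg hu, zero_mul]
      · have hz : (fun c => a (c, v)) = 0 := funext fun c => ha c v (fun h => hv h.2)
        rw [hz]; exact Submodule.zero_mem _
    have hrow : ∀ c : C, (fun v => a (c, v)) ∈ kerSupp (projM (Anc H S) * H) S := by
      intro c
      by_cases hc : c ∈ T
      · refine ⟨fun v hv => ha c v (fun h => hv h.2), ?_⟩
        funext c'
        rw [Pi.zero_apply, mulVec_projA]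
        by_cases hc' : c' ∈ Anc H S
        · have h0 := h2 c c' hc hc'
          rw [vecMul_HZ'_inr, if_pos hc, one_mul] at h0
          rw [if_pos hc', one_mul, ← h0]
          refine Finset.sum_congr rfl fun v _ => ?_
          by_cases hv : v ∈ S
          · rw [if_pos hv, one_mul]
          · rw [if_neg hv, ha c v (fun h => hv h.2), zero_mul, mul_zero, mul_zero]
        · rw [if_neg hc', zero_mul]
      · have hz : (fun v => a (c, v)) = 0 := funext fun v => ha c v (fun h => hc h.1)
        rw [hz]; exact Submodule.zero_mem _
    obtain ⟨q, hq⟩ := Submodule.exists_isCompl (kerSupp (projM (Anc H S) * H) S)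
    set Kf := kerSupp (projM (Anc H S) * H) S with hKfdef
    set π := Kf.linearProjOfIsCompl q hq with hπdef
    let b := Module.finBasis (ZMod 2) Kf
    let ℓ : Fin (Module.finrank (ZMod 2) Kf) → ((V → ZMod 2) →ₗ[ZMod 2] ZMod 2) :=
      fun i => (b.coord i).comp π
    let g : Fin (Module.finrank (ZMod 2) Kf) → C → ZMod 2 :=
      fun i c => ℓ i (fun v => a (c, v))
    have key : a = ∑ i, (fun p : C × V => g i p.1 * ((b i : V → ZMod 2) p.2)) := by
      funext p
      obtain ⟨c, v⟩ := p
      have hmem := hrow c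
      have hπr : π (fun v => a (c, v)) = ⟨fun v => a (c, v), hmem⟩ :=
        Submodule.linearProjOfIsCompl_apply_left hq ⟨fun v => a (c, v), hmem⟩
      have hrep := b.sum_repr ⟨fun v => a (c, v), hmem⟩
      have hval := congrArg (fun x : Kf => (x : V → ZMod 2) v) hrep
      simp only [AddSubmonoidClass.coe_finset_sum, SetLike.val_smul, Finset.sum_apply,
        Pi.smul_apply, smul_eq_mul] at hval
      rw [Finset.sum_apply]
      have hgc : ∀ i, g i c = b.repr ⟨fun v => a (c, v), hmem⟩ i := by
        intro i
        show (b.coord i) (π (fun v => a (c, v))) = _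
        rw [hπr, Module.Basis.coord_apply]
      calc a (c, v) = ∑ i, b.repr ⟨fun v => a (c, v), hmem⟩ i * (b i : V → ZMod 2) v :=
            hval.symm
        _ = ∑ i, g i c * (b i : V → ZMod 2) v := by
            exact Finset.sum_congr rfl fun i _ => by rw [hgc i]
    have hg : ∀ i, g i ∈ kerSupp (projM (AncT H T) * Hᵀ) T := by
      intro i
      have hgi : g i = ∑ v, (ℓ i (fun w => if v = w then 1 else 0)) • (fun c => a (c, v)) := by
        funext c
        rw [Finset.sum_apply]
        have hrow_eq : (fun v => a (c, v)) =
            ∑ v, a (c, v) • (fun w => if v = w then (1 : ZMod 2) else 0) :=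
          pi_eq_sum_univ _
        calc g i c = ℓ i (fun v => a (c, v)) := rfl
          _ = ℓ i (∑ v, a (c, v) • fun w => if v = w then 1 else 0) := by rw [← hrow_eq]
          _ = ∑ v, a (c, v) * ℓ i (fun w => if v = w then 1 else 0) := by
              rw [map_sum]
              exact Finset.sum_congr rfl fun v _ => by rw [_root_.map_smul, smul_eq_mul]
          _ = ∑ v, (ℓ i (fun w => if v = w then 1 else 0)) • (fun c => a (c, v)) c := by
              exact Finset.sum_congr rfl fun v _ => by simp [mul_comm]
      rw [hgi]
      exact Submodule.sum_mem _ fun v _ => Submodule.smul_mem _ _ (hcol v)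
    rw [key]
    refine Submodule.sum_mem _ fun i _ => Submodule.subset_span ?_
    exact ⟨g i, (b i : V → ZMod 2), (hg i).1, (hg i).2, (b i).2.1, (b i).2.2, rfl⟩
  · intro hmem
    let L : Submodule (ZMod 2) (C × V → ZMod 2) :=
      { carrier := {x | (∀ u v, u ∈ AncT H T → v ∈ S →
            Matrix.vecMul x (HZ' H S T) (Sum.inl (u, v)) = 0) ∧
          (∀ c c', c ∈ T → c' ∈ Anc H S →
            Matrix.vecMul x (HZ' H S T) (Sum.inr (c, c')) = 0)}
        add_mem' := fun hx hy =>
          ⟨fun u v hu hv => by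
              rw [Matrix.add_vecMul, Pi.add_apply, hx.1 u v hu hv, hy.1 u v hu hv, add_zero],
           fun c c' hc hc' => by
              rw [Matrix.add_vecMul, Pi.add_apply, hx.2 c c' hc hc', hy.2 c c' hc hc', add_zero]⟩
        zero_mem' := ⟨fun u v _ _ => by rw [Matrix.zero_vecMul]; rfl,
          fun c c' _ _ => by rw [Matrix.zero_vecMul]; rfl⟩
        smul_mem' := fun r x hx =>
          ⟨fun u v hu hv => by
              rw [Matrix.smul_vecMul, Pi.smul_apply, hx.1 u v hu hv, smul_zero],
           fun c c' hc hc' => by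
              rw [Matrix.smul_vecMul, Pi.smul_apply, hx.2 c c' hc hc', smul_zero]⟩ }
    have hle : Submodule.span (ZMod 2)
        {w : C × V → ZMod 2 | ∃ g : C → ZMod 2, ∃ f : V → ZMod 2,
          (∀ c ∉ T, g c = 0) ∧ (projM (AncT H T) * Hᵀ).mulVec g = 0 ∧
          (∀ v ∉ S, f v = 0) ∧ (projM (Anc H S) * H).mulVec f = 0 ∧
          w = fun p : C × V => g p.1 * f p.2} ≤ L := by
      rw [Submodule.span_le]
      rintro w ⟨g, f, hgT, hgK, hfS, hfK, rfl⟩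
      constructor
      · intro u v hu hv
        rw [vecMul_HZ'_inl]
        have h0 : ∑ c, H c u * g c = 0 := by
          have hK := congrFun hgK u
          rw [Pi.zero_apply, mulVec_projB, if_pos hu, one_mul] at hK
          exact hK
        have hsum : (∑ c, (if c ∈ T then (1 : ZMod 2) else 0) * H c u *
            (fun p : C × V => g p.1 * f p.2) (c, v)) = (∑ c, H c u * g c) * f v := by
          rw [Finset.sum_mul]
          refine Finset.sum_congr rfl fun c _ => ?_
          by_cases hc : c ∈ T
          · rw [if_pos hc]; ring
          · rw [if_neg hc, hgT c hc]; ring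
        rw [hsum, h0, zero_mul, mul_zero]
      · intro c c' hc hc'
        rw [vecMul_HZ'_inr]
        have h0 : ∑ v, H c' v * f v = 0 := by
          have hK := congrFun hfK c'
          rw [Pi.zero_apply, mulVec_projA, if_pos hc', one_mul] at hK
          exact hK
        have hsum : (∑ v, (if v ∈ S then (1 : ZMod 2) else 0) * H c' v *
            (fun p : C × V => g p.1 * f p.2) (c, v)) = g c * ∑ v, H c' v * f v := by
          rw [Finset.mul_sum]
          refine Finset.sum_congr rfl fun v _ => ?_
          by_cases hv : v ∈ S
          · rw [if_pos hv]; ring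
          · rw [if_neg hv, hfS v hv]; ring
        rw [hsum, h0, mul_zero, mul_zero]
    exact hle hmem
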